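/- Let R be a commutative ring with unit and let V₁, V₂, V₃, V₄ be R-modules. Let A : V₁ → V₂, B : V₃ → V₄, Y : V₄ → V₂, Z : V₁ → V₃, A⁻ : V₂ → V₁, and S⁻ : V₄ → V₃ be R-module homomorphisms such that A ∘ A⁻ ∘ A = A, A ∘ A⁻ ∘ (Y ∘ B ∘ Z) = Y ∘ B ∘ Z, (Y ∘ B ∘ Z) ∘ A⁻ ∘ A = Y ∘ B ∘ Z, and S ∘ S⁻ ∘ S = S where S := B + B ∘ Z ∘ A⁻ ∘ Y ∘ B. Then A⁻ − A⁻ ∘ Y ∘ B ∘ S⁻ ∘ B ∘ Z ∘ A⁻ is an inner inverse of A + Y ∘ B ∘ Z, i.e. (A + Y∘B∘Z) ∘ (A⁻ − A⁻∘Y∘B∘S⁻∘B∘Z∘A⁻) ∘ (A + Y∘B∘Z) = A + Y∘B∘Z. -/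
import Mathlib


/-- Sherman–Morrison–Woodbury-type formula for inner inverses of
`R`-module homomorphisms: if `A ∘ A⁻ ∘ A = A`, `A ∘ A⁻ ∘ (Y∘B∘Z) = Y∘B∘Z`,
`(Y∘B∘Z) ∘ A⁻ ∘ A = Y∘B∘Z` and `S ∘ S⁻ ∘ S = S` where `S = B + B∘Z∘A⁻∘Y∘B`, then
`A⁻ − A⁻∘Y∘B∘S⁻∘B∘Z∘A⁻` is an inner inverse of `A + Y∘B∘Z`. -/
theorem woodbury_innerInverse {R V₁ V₂ V₃ V₄ : Type*} [CommRing R]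
    [AddCommGroup V₁] [Module R V₁] [AddCommGroup V₂] [Module R V₂]
    [AddCommGroup V₃] [Module R V₃] [AddCommGroup V₄] [Module R V₄]
    (A : V₁ →ₗ[R] V₂) (B : V₃ →ₗ[R] V₄) (Y : V₄ →ₗ[R] V₂) (Z : V₁ →ₗ[R] V₃)
    (Ai : V₂ →ₗ[R] V₁) (Si : V₄ →ₗ[R] V₃)
    (h₁ : A ∘ₗ Ai ∘ₗ A = A)
    (h₂ : A ∘ₗ Ai ∘ₗ (Y ∘ₗ B ∘ₗ Z) = Y ∘ₗ B ∘ₗ Z)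
    (h₃ : (Y ∘ₗ B ∘ₗ Z) ∘ₗ Ai ∘ₗ A = Y ∘ₗ B ∘ₗ Z)
    (h₄ : (B + B ∘ₗ Z ∘ₗ Ai ∘ₗ Y ∘ₗ B) ∘ₗ Si ∘ₗ (B + B ∘ₗ Z ∘ₗ Ai ∘ₗ Y ∘ₗ B) =
      B + B ∘ₗ Z ∘ₗ Ai ∘ₗ Y ∘ₗ B) :
    (A + Y ∘ₗ B ∘ₗ Z) ∘ₗ (Ai - Ai ∘ₗ Y ∘ₗ B ∘ₗ Si ∘ₗ B ∘ₗ Z ∘ₗ Ai) ∘ₗ (A + Y ∘ₗ B ∘ₗ Z) =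
      A + Y ∘ₗ B ∘ₗ Z := by
  have h1 : ∀ v, A (Ai (A v)) = A v := fun v => by
    simpa using LinearMap.congr_fun h₁ v
  have h2 : ∀ v, A (Ai (Y (B (Z v)))) = Y (B (Z v)) := fun v => by
    simpa using LinearMap.congr_fun h₂ v
  have h3 : ∀ v, Y (B (Z (Ai (A v)))) = Y (B (Z v)) := fun v => by
    simpa using LinearMap.congr_fun h₃ v
  have h4 : ∀ v, (B (Si (B v + B (Z (Ai (Y (B v)))))) +
      B (Z (Ai (Y (B (Si (B v + B (Z (Ai (Y (B v)))))))))))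
      = B v + B (Z (Ai (Y (B v)))) := fun v => by
    simpa using LinearMap.congr_fun h₄ v
  ext x
  simp only [LinearMap.comp_apply, LinearMap.add_apply, LinearMap.sub_apply, map_add, map_sub]
  rw [h1 x, h2 x, ← h3 x]
  set v : V₃ := Z (Ai (A x)) with hv
  set w : V₄ := B v + B (Z (Ai (Y (B v)))) with hw
  have hblock :
      (A (Ai (Y (B (Si (B v))))) + Y (B (Z (Ai (Y (B (Si (B v)))))))) +
      (A (Ai (Y (B (Si (B (Z (Ai (Y (B v))))))))) +
        Y (B (Z (Ai (Y (B (Si (B (Z (Ai (Y (B v)))))))))))) =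
      Y (B v) + Y (B (Z (Ai (Y (B v))))) := by
    have step1 :
        (A (Ai (Y (B (Si (B v))))) + Y (B (Z (Ai (Y (B (Si (B v)))))))) +
        (A (Ai (Y (B (Si (B (Z (Ai (Y (B v))))))))) +
          Y (B (Z (Ai (Y (B (Si (B (Z (Ai (Y (B v)))))))))))) =
        A (Ai (Y (B (Si w)))) + Y (B (Z (Ai (Y (B (Si w)))))) := by
      rw [hw]
      simp only [map_add]
      abel
    have step2 : A (Ai (Y (B (Si w)))) + Y (B (Z (Ai (Y (B (Si w)))))) =
        A (Ai (Y (B (Si w) + B (Z (Ai (Y (B (Si w)))))))) := by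
      simp only [map_add, h2 (Ai (Y (B (Si w))))]
    have step3 : A (Ai (Y (B (Si w) + B (Z (Ai (Y (B (Si w)))))))) =
        A (Ai (Y (B v + B (Z (Ai (Y (B v))))))) := by
      rw [hw, h4 v]
    have step4 : A (Ai (Y (B v + B (Z (Ai (Y (B v))))))) =
        Y (B v) + Y (B (Z (Ai (Y (B v))))) := by
      simp only [map_add]
      rw [hv, h2 (Ai (A x)), h2 (Ai (Y (B (Z (Ai (A x))))))]
    rw [step1, step2, step3, step4]
  rw [← hblock]
  abel
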